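/- Let 0 ≤ s' < s < 1 and Q = (s−s')/(1−s'), p = 1 − Q. With U the 3×3 separation matrix, e₁ = (1,0,0), the vector U·e₁ equals √p·(1,0,0) + √Q·(0,0,1), and U·(s, √(1−s²), 0) equals √p·(s', √(1−s'²), 0) + √Q·(0,0,1). -/

import Mathlib

theorem stmt18 (s s' : ℝ) (h0 : 0 ≤ s') (h1 : s' < s) (h2 : s < 1) :
    let Q := (s - s') / (1 - s')
    let p := 1 - Q
    let U : Matrix (Fin 3) (Fin 3) ℝ := !![
      Real.sqrt ((1-s)/(1-s')), -(s-s')/Real.sqrt ((1-s')*(1+s)),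
        -Real.sqrt ((1+s')*(s-s')/((1-s')*(1+s)));
      0, Real.sqrt ((1+s')/(1+s)), -Real.sqrt ((s-s')/(1+s));
      Real.sqrt ((s-s')/(1-s')), Real.sqrt ((1-s)*(s-s')/((1+s)*(1-s'))),
        Real.sqrt ((1-s)*(1+s')/((1-s')*(1+s)))]
    U.mulVec ![1, 0, 0] = Real.sqrt p • ![1, 0, 0] + Real.sqrt Q • ![0, 0, 1] ∧
    U.mulVec ![s, Real.sqrt (1 - s^2), 0]
      = Real.sqrt p • ![s', Real.sqrt (1 - s'^2), 0] + Real.sqrt Q • ![0, 0, 1] := by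
  intro Q p U
  have hs1 : (0:ℝ) < 1 - s := by linarith
  have hs1' : (0:ℝ) < 1 - s' := by linarith
  have hp1 : (0:ℝ) < 1 + s := by linarith
  have hp1' : (0:ℝ) < 1 + s' := by linarith
  have hss : (0:ℝ) < s - s' := by linarith
  set A := Real.sqrt (1-s) with hAdef
  set B := Real.sqrt (1+s) with hBdef
  set C := Real.sqrt (1-s') with hCdef
  set D := Real.sqrt (1+s') with hDdef
  set E := Real.sqrt (s-s') with hEdef
  have hA : 0 < A := Real.sqrt_pos.2 hs1
  have hB : 0 < B := Real.sqrt_pos.2 hp1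
  have hC : 0 < C := Real.sqrt_pos.2 hs1'
  have hD : 0 < D := Real.sqrt_pos.2 hp1'
  have hE : 0 < E := Real.sqrt_pos.2 hss
  have hA2 : A^2 = 1 - s := Real.sq_sqrt hs1.le
  have hB2 : B^2 = 1 + s := Real.sq_sqrt hp1.le
  have hC2 : C^2 = 1 - s' := Real.sq_sqrt hs1'.le
  have hD2 : D^2 = 1 + s' := Real.sq_sqrt hp1'.le
  have hE2 : E^2 = s - s' := Real.sq_sqrt hss.le
  have hQ : Real.sqrt Q = E / C := by
    rw [show Q = (s-s')/(1-s') from rfl, Real.sqrt_div hss.le]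
  have hpval : p = (1-s)/(1-s') := by
    show 1 - (s-s')/(1-s') = (1-s)/(1-s')
    field_simp
    ring
  have hp : Real.sqrt p = A / C := by
    rw [hpval, Real.sqrt_div hs1.le]
  have e1 : Real.sqrt ((1-s)/(1-s')) = A / C := by
    rw [Real.sqrt_div hs1.le]
  have e2 : Real.sqrt ((1-s')*(1+s)) = C * B := by
    rw [Real.sqrt_mul hs1'.le]
  have e3 : Real.sqrt ((1+s')*(s-s')/((1-s')*(1+s))) = D * E / (C * B) := by
    rw [Real.sqrt_div (by positivity), Real.sqrt_mul hp1'.le, Real.sqrt_mul hs1'.le]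
  have e4 : Real.sqrt ((1+s')/(1+s)) = D / B := by
    rw [Real.sqrt_div hp1'.le]
  have e5 : Real.sqrt ((s-s')/(1+s)) = E / B := by
    rw [Real.sqrt_div hss.le]
  have e6 : Real.sqrt ((s-s')/(1-s')) = E / C := by
    rw [Real.sqrt_div hss.le]
  have e7 : Real.sqrt ((1-s)*(s-s')/((1+s)*(1-s'))) = A * E / (B * C) := by
    rw [Real.sqrt_div (by positivity), Real.sqrt_mul hs1.le, Real.sqrt_mul hp1.le]
  have e8 : Real.sqrt ((1-s)*(1+s')/((1-s')*(1+s))) = A * D / (C * B) := by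
    rw [Real.sqrt_div (by positivity), Real.sqrt_mul hs1.le, Real.sqrt_mul hs1'.le]
  have e9 : Real.sqrt (1 - s^2) = A * B := by
    rw [show 1 - s^2 = (1-s)*(1+s) by ring, Real.sqrt_mul hs1.le]
  have e10 : Real.sqrt (1 - s'^2) = C * D := by
    rw [show 1 - s'^2 = (1-s')*(1+s') by ring, Real.sqrt_mul hs1'.le]
  constructor
  · funext i
    fin_cases i <;>
      simp [U, Matrix.mulVec, dotProduct, Fin.sum_univ_three, e1, e2, e3, e4, e5,
        e6, e7, e8, hp, hQ]
  · funext i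
    fin_cases i
    · simp only [U, Matrix.mulVec, dotProduct, Fin.sum_univ_three, e1, e2, e3, e4,
        e5, e6, e7, e8, e9, e10, hp, hQ, Matrix.cons_val', Matrix.cons_val_zero,
        Matrix.cons_val_one, Matrix.head_cons, Matrix.empty_val', Matrix.cons_val_fin_one,
        Matrix.head_fin_const, Pi.add_apply, Pi.smul_apply, smul_eq_mul,
        Matrix.cons_val_two, Matrix.tail_cons, Matrix.of_apply, Fin.reduceFinMk]
      field_simp
      ring
    · simp only [U, Matrix.mulVec, dotProduct, Fin.sum_univ_three, e1, e2, e3, e4,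
        e5, e6, e7, e8, e9, e10, hp, hQ, Matrix.cons_val', Matrix.cons_val_zero,
        Matrix.cons_val_one, Matrix.head_cons, Matrix.empty_val', Matrix.cons_val_fin_one,
        Matrix.head_fin_const, Pi.add_apply, Pi.smul_apply, smul_eq_mul,
        Matrix.cons_val_two, Matrix.tail_cons, Matrix.of_apply, Fin.reduceFinMk]
      field_simp
      ring
    · simp only [U, Matrix.mulVec, dotProduct, Fin.sum_univ_three, e1, e2, e3, e4,
        e5, e6, e7, e8, e9, e10, hp, hQ, Matrix.cons_val', Matrix.cons_val_zero,
        Matrix.cons_val_one, Matrix.head_cons, Matrix.empty_val', Matrix.cons_val_fin_one,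
        Matrix.head_fin_const, Pi.add_apply, Pi.smul_apply, smul_eq_mul,
        Matrix.cons_val_two, Matrix.tail_cons, Matrix.of_apply, Fin.reduceFinMk]
      field_simp
      linear_combination (E * B) * hA2
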